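/- Let w' be a valuation of K(X) and let w = [W; φ, γ] be a limit augmentation of an essential continuous family W = (ρ_i = [w'; χ_i, γ_i])_{i∈A} of augmentations of w'. Then φ is an abstract key polynomial for w, and δ(χ_i) < δ(φ) for all i ∈ A. -/

import Mathlib

namespace MLV

open Polynomial

/-- An additive valuation on a commutative ring `R` with values in `Γ ∪ {∞}`
(written additively, with the `min` convention), thought of as the restriction
to `R` of a valuation on its fraction field. -/
structure ValOn (R : Type*) [CommRing R] (Γ : Type*) [AddCommGroup Γ] [LinearOrder Γ] [IsOrderedAddMonoid Γ] where
  toFun : R → WithTop Γ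
  map_zero' : toFun 0 = ⊤
  ne_top' : ∀ f : R, f ≠ 0 → toFun f ≠ ⊤
  map_mul' : ∀ f g : R, toFun (f * g) = toFun f + toFun g
  add_min' : ∀ f g : R, min (toFun f) (toFun g) ≤ toFun (f + g)

variable {K : Type*} [Field K] {Γ : Type*} [AddCommGroup Γ] [LinearOrder Γ] [IsOrderedAddMonoid Γ]

/-- `w` (a valuation on `K(X)`, restricted to `K[X]`) extends the valuation `v` of `K`. -/
def Extends (w : ValOn (Polynomial K) Γ) (v : ValOn K Γ) : Prop :=
  ∀ c : K, w.toFun (C c) = v.toFun c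

/-- `wbar` (a valuation on `K̄(X)`) is a common extension of `w` and of `vbar`. -/
def IsCommonExt {L : Type*} [Field L] [Algebra K L]
    (wbar : ValOn (Polynomial L) Γ) (w : ValOn (Polynomial K) Γ) (vbar : ValOn L Γ) : Prop :=
  (∀ f : Polynomial K, wbar.toFun (f.map (algebraMap K L)) = w.toFun f) ∧
  (∀ c : L, wbar.toFun (C c) = vbar.toFun c)

/-- `δ(f) = max { w̄(X - α) : α ∈ K̄, f(α) = 0 }` (as an element of `WithBot (WithTop Γ)`,
the value `⊥` corresponding to a polynomial without roots). -/
noncomputable def delta {L : Type*} [Field L] [Algebra K L]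
    (wbar : ValOn (Polynomial L) Γ) (f : Polynomial K) : WithBot (WithTop Γ) :=
  (((f.map (algebraMap K L)).roots).map
    fun α => ((wbar.toFun (X - C α) : WithTop Γ) : WithBot (WithTop Γ))).sup

/-- `Q` is an abstract key polynomial for `w` (with respect to the common extension `wbar`
computing `δ`): `Q` is monic and `δ(f) < δ(Q)` for every nonzero `f` with `deg f < deg Q`. -/
def IsABKP {L : Type*} [Field L] [Algebra K L]
    (wbar : ValOn (Polynomial L) Γ) (Q : Polynomial K) : Prop :=
  Q.Monic ∧ ∀ f : Polynomial K, f ≠ 0 → f.degree < Q.degree → delta wbar f < delta wbar Q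

/-- The `Q`-truncation `w_Q` of `w`: on the `Q`-expansion `f = ∑ fᵢ Qⁱ` it equals
`min_i w(fᵢ Qⁱ)`. -/
noncomputable def truncVal (w : ValOn (Polynomial K) Γ) (Q f : Polynomial K) : WithTop Γ :=
  (Finset.range (f.natDegree + 1)).inf fun i => w.toFun ((f /ₘ Q ^ i) %ₘ Q * Q ^ i)

/-- `f ∼_u g` : `u(f - g) > u f = u g`. -/
def EquivMod (u : Polynomial K → WithTop Γ) (f g : Polynomial K) : Prop :=
  u f < u (f - g) ∧ u f = u g

/-- `f ∣_u g` : `g ∼_u f h` for some `h`. -/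
def DvdMod (u : Polynomial K → WithTop Γ) (f g : Polynomial K) : Prop :=
  ∃ h : Polynomial K, EquivMod u g (f * h)

/-- A key polynomial for `u`: monic, `u`-irreducible and `u`-minimal. -/
def IsKeyPol (u : Polynomial K → WithTop Γ) (φ : Polynomial K) : Prop :=
  φ.Monic ∧
  (∀ h q : Polynomial K, DvdMod u φ (h * q) → DvdMod u φ h ∨ DvdMod u φ q) ∧
  (∀ h : Polynomial K, h ≠ 0 → DvdMod u φ h → φ.degree ≤ h.degree)

/-- A key polynomial for `u` of minimal degree (i.e. of degree `deg(u)`). -/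
def IsMinKeyPol (u : Polynomial K → WithTop Γ) (φ : Polynomial K) : Prop :=
  IsKeyPol u φ ∧ ∀ ψ : Polynomial K, IsKeyPol u ψ → φ.degree ≤ ψ.degree

/-- `u ≤ u'` pointwise on `K[X]`. -/
def FnLe (u u' : Polynomial K → WithTop Γ) : Prop :=
  ∀ f : Polynomial K, u f ≤ u' f

/-- `u < u'` : `u ≤ u'` and `u f < u' f` for some `f`. -/
def FnLt (u u' : Polynomial K → WithTop Γ) : Prop :=
  FnLe u u' ∧ ∃ f : Polynomial K, u f < u' f

/-- `g ∈ Φ(u, u')` : `g` is monic of minimal degree with `u g < u' g`. -/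
def InPhi (u u' : Polynomial K → WithTop Γ) (g : Polynomial K) : Prop :=
  g.Monic ∧ u g < u' g ∧
  ∀ h : Polynomial K, h.Monic → u h < u' h → g.degree ≤ h.degree

/-- The value at `f` of the augmented valuation `[u; φ, γ]`, computed via the
`φ`-expansion `f = ∑ fᵢ φⁱ` as `min_i (u fᵢ + i γ)`. -/
noncomputable def augVal (u : Polynomial K → WithTop Γ) (φ : Polynomial K) (γ : Γ)
    (f : Polynomial K) : WithTop Γ :=
  (Finset.range (f.natDegree + 1)).inf
    fun i => u ((f /ₘ φ ^ i) %ₘ φ) + i • ((γ : WithTop Γ))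

/-- `u' = [u; φ, γ]` is the ordinary augmentation of `u` at the key polynomial `φ`
with value `γ > u φ`. -/
def IsOrdAug (u : Polynomial K → WithTop Γ) (φ : Polynomial K) (γ : Γ)
    (u' : Polynomial K → WithTop Γ) : Prop :=
  IsKeyPol u φ ∧ u φ < (γ : WithTop Γ) ∧ ∀ f : Polynomial K, u' f = augVal u φ γ f

/-- A continuous family of augmentations `(ρ_i = [w'; χ_i, γ_i])_{i ∈ ι}` of `w'`. -/
structure ContFamily (w' : ValOn (Polynomial K) Γ) (ι : Type*) [LinearOrder ι] where
  chi : ι → Polynomial K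
  gam : ι → Γ
  rho : ι → ValOn (Polynomial K) Γ
  no_last : ∀ i : ι, ∃ j : ι, i < j
  gam_mono : StrictMono gam
  aug : ∀ i : ι, IsOrdAug w'.toFun (chi i) (gam i) (rho i).toFun
  deg_eq : ∀ i j : ι, (chi i).degree = (chi j).degree
  key_step : ∀ i j : ι, i < j → IsKeyPol (rho i).toFun (chi j)
  not_equiv : ∀ i j : ι, i < j → ¬ EquivMod (rho i).toFun (chi j) (chi i)
  step : ∀ i j : ι, i < j → IsOrdAug (rho i).toFun (chi j) (gam j) (rho j).toFun

/-- `f` is `W`-stable with stable value `c`. -/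
def StableAt {w' : ValOn (Polynomial K) Γ} {ι : Type*} [LinearOrder ι]
    (F : ContFamily w' ι) (f : Polynomial K) (c : WithTop Γ) : Prop :=
  ∃ i0 : ι, ∀ i : ι, i0 ≤ i → (F.rho i).toFun f = c

/-- `f` is `W`-stable. -/
def IsStable {w' : ValOn (Polynomial K) Γ} {ι : Type*} [LinearOrder ι]
    (F : ContFamily w' ι) (f : Polynomial K) : Prop :=
  ∃ c : WithTop Γ, StableAt F f c

/-- The valuation `w` is the stable limit of the family `F`. -/
def IsStableLimit {w' : ValOn (Polynomial K) Γ} {ι : Type*} [LinearOrder ι]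
    (F : ContFamily w' ι) (w : ValOn (Polynomial K) Γ) : Prop :=
  ∀ f : Polynomial K, StableAt F f (w.toFun f)

/-- `Q` is a MacLane–Vaquié limit key polynomial for `F`: monic, `F`-unstable,
of minimal degree among unstable polynomials. -/
def IsLimitKP {w' : ValOn (Polynomial K) Γ} {ι : Type*} [LinearOrder ι]
    (F : ContFamily w' ι) (Q : Polynomial K) : Prop :=
  Q.Monic ∧ ¬ IsStable F Q ∧ ∀ g : Polynomial K, ¬ IsStable F g → Q.degree ≤ g.degree

/-- The continuous family `F` is essential: `deg(W) < m_∞ < ∞`. -/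
def IsEssential {w' : ValOn (Polynomial K) Γ} {ι : Type*} [LinearOrder ι]
    (F : ContFamily w' ι) : Prop :=
  (∃ f : Polynomial K, ¬ IsStable F f) ∧
  ∀ (i : ι) (f : Polynomial K), ¬ IsStable F f → (F.chi i).degree < f.degree

/-- `w = [F; Q, γ]` is the limit augmentation of the family `F` at the limit key
polynomial `Q` with value `γ`: on `Q`-expansions, `w f = min_i (ρ_W(fᵢ) + iγ)`, which
since the coefficients are stable is the eventual value of `[ρ_i; Q, γ]` on `f`. -/
def IsLimitAug {w' : ValOn (Polynomial K) Γ} {ι : Type*} [LinearOrder ι]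
    (F : ContFamily w' ι) (Q : Polynomial K) (γ : Γ)
    (w : ValOn (Polynomial K) Γ) : Prop :=
  IsLimitKP F Q ∧ (∀ i : ι, (F.rho i).toFun Q < (γ : WithTop Γ)) ∧
  ∀ f : Polynomial K, ∃ i0 : ι, ∀ i : ι, i0 ≤ i → w.toFun f = augVal (F.rho i).toFun Q γ f

/-- `w` is a depth-zero valuation `w_{α,δ}` over `v`. -/
def IsDepthZero (v : ValOn K Γ) (w : ValOn (Polynomial K) Γ) : Prop :=
  ∃ (α : K) (d : Γ), ∀ f : Polynomial K,
    w.toFun f = (Finset.range (f.natDegree + 1)).inf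
      fun i => v.toFun (((Polynomial.taylor α) f).coeff i) + i • ((d : WithTop Γ))

/-- An ordinary augmentation step of a MacLane–Vaquié chain:
`u' = [u; φ, γ]` with `deg(u) < deg Φ(u, u')`. -/
def OrdMLVStep (u u' : Polynomial K → WithTop Γ) (φ : Polynomial K) (γ : Γ) : Prop :=
  IsOrdAug u φ γ u' ∧
  ∀ ψ g : Polynomial K, IsMinKeyPol u ψ → InPhi u u' g → ψ.degree < g.degree

/-- A limit augmentation step of a MacLane–Vaquié chain, with the underlying essential
continuous family `F` made explicit: `w = [F; φ, γ]`, `deg(w') = deg Φ(w', w)` and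
`φprev ∉ Φ(w', w)`. -/
def LimMLVStepWith {w' : ValOn (Polynomial K) Γ} {ι : Type*} [LinearOrder ι]
    (F : ContFamily w' ι) (w : ValOn (Polynomial K) Γ)
    (φprev φ : Polynomial K) (γ : Γ) : Prop :=
  IsEssential F ∧ IsLimitAug F φ γ w ∧
  (∀ ψ g : Polynomial K, IsMinKeyPol w'.toFun ψ → InPhi w'.toFun w.toFun g →
    ψ.degree = g.degree) ∧
  ¬ InPhi w'.toFun w.toFun φprev

/-- A limit augmentation step of a MacLane–Vaquié chain (the underlying essential
continuous family being existentially quantified). -/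
def LimMLVStep (w' w : ValOn (Polynomial K) Γ) (φprev φ : Polynomial K) (γ : Γ) : Prop :=
  ∃ (ι : Type) (li : LinearOrder ι) (F : @ContFamily K _ Γ _ _ _ w' ι li),
    @LimMLVStepWith K _ Γ _ _ _ w' ι li F w φprev φ γ

/-- Membership in the index set `I`: `I = ℕ` if `o = none`, and `I = {0, …, N}`
if `o = some N`. -/
def InIdx (o : Option ℕ) (j : ℕ) : Prop :=
  ∀ N : ℕ, o = some N → j ≤ N

/-- An induced complete sequence `{Q_i}_{i ∈ Δ}` of abstract key polynomials for `w`: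
a complete sequence of ABKPs, organized in blocks `Δ_j = {j} ∪ ϑ_j` (for `j` in
`I = {0,…,N}` or `I = ℕ`), satisfying the properties of Remark 1.3.  Here `blk i`
is the block of an index `i ∈ Δ`, `main j ∈ Δ` is the distinguished first element
of the block `Δ_j`, and `ϑ_j = {i ∈ Δ | blk i = j, i ≠ main j}`. -/
structure ICS {L : Type*} [Field L] [Algebra K L]
    (wbar : ValOn (Polynomial L) Γ) (w : ValOn (Polynomial K) Γ)
    (Δ : Type*) [LinearOrder Δ] where
  Q : Δ → Polynomial K
  abkp : ∀ i : Δ, IsABKP wbar (Q i)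
  wf : WellFoundedLT Δ
  delta_mono : ∀ i i' : Δ, i < i' → delta wbar (Q i) < delta wbar (Q i')
  wval_mono : ∀ i i' : Δ, i < i' → w.toFun (Q i) < w.toFun (Q i')
  complete : ∀ f : Polynomial K, f ≠ 0 →
    ∃ i : Δ, (Q i).degree ≤ f.degree ∧ truncVal w (Q i) f = w.toFun f
  Ifin : Option ℕ
  blk : Δ → ℕ
  main : ℕ → Δ
  blk_mono : ∀ i i' : Δ, i ≤ i' → blk i ≤ blk i'
  blk_mem : ∀ i : Δ, InIdx Ifin (blk i)
  blk_main : ∀ j : ℕ, InIdx Ifin j → blk (main j) = j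
  main_min : ∀ (j : ℕ) (i : Δ), blk i = j → main j ≤ i
  theta_no_last : ∀ i : Δ, i ≠ main (blk i) →
    ∃ i' : Δ, blk i' = blk i ∧ i' ≠ main (blk i) ∧ i < i'
  deg_blk_eq : ∀ i i' : Δ, blk i = blk i' → (Q i).degree = (Q i').degree
  deg_blk_lt : ∀ i i' : Δ, blk i < blk i' → (Q i).degree < (Q i').degree
  degQ0 : (Q (main 0)).degree = 1


section Helpers

open Polynomial

variable {Γ : Type*} [AddCommGroup Γ] [LinearOrder Γ] [IsOrderedAddMonoid Γ]

private lemma gamma_two_zero {a : Γ} (h : a + a = 0) : a = 0 := by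
  rcases lt_trichotomy a 0 with h1 | h1 | h1
  · have h2 : a + a < 0 + 0 := add_lt_add h1 h1
    rw [add_zero] at h2
    exact absurd h (ne_of_lt h2)
  · exact h1
  · have h2 : (0 : Γ) + 0 < a + a := add_lt_add h1 h1
    rw [add_zero] at h2
    exact absurd h.symm (ne_of_lt h2)

private lemma wt_smul_ne_top {n : ℕ} {a : WithTop Γ} (h : a ≠ ⊤) : n • a ≠ ⊤ := by
  induction n with
  | zero => simp
  | succ n ih =>
    rw [succ_nsmul]
    exact WithTop.add_ne_top.mpr ⟨ih, h⟩

private lemma wt_add_lt_add {a b c d : WithTop Γ} (h1 : a < b) (h2 : c ≤ d)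
    (h3 : a + c ≠ ⊤) : a + c < b + d := by
  rcases WithTop.add_ne_top.mp h3 with ⟨ha, hc⟩
  rcases eq_or_ne b ⊤ with hb | hb
  · subst hb; rw [top_add]; exact h3.lt_top
  rcases eq_or_ne d ⊤ with hd | hd
  · subst hd; rw [add_top]; exact h3.lt_top
  lift a to Γ using ha
  lift b to Γ using hb
  lift c to Γ using hc
  lift d to Γ using hd
  have h1' : a < b := by exact_mod_cast h1
  have h2' : c ≤ d := by exact_mod_cast h2
  exact_mod_cast add_lt_add_of_lt_of_le h1' h2'

private lemma wt_add_lt_add' {a b c d : WithTop Γ} (h1 : a ≤ b) (h2 : c < d)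
    (h3 : a + c ≠ ⊤) : a + c < b + d := by
  rw [add_comm a c, add_comm b d]
  exact wt_add_lt_add h2 h1 (by rwa [add_comm])

namespace ValOn

variable {R : Type*} [CommRing R] [Nontrivial R] (u : ValOn R Γ)

lemma val_one : u.toFun 1 = 0 := by
  have h := u.map_mul' 1 1
  rw [mul_one] at h
  have h1 : u.toFun 1 ≠ ⊤ := u.ne_top' 1 one_ne_zero
  lift u.toFun 1 to Γ using h1 with b hb
  have h2 : b = b + b := by exact_mod_cast h
  exact_mod_cast (show b = 0 by simpa using h2)

lemma val_neg_one : u.toFun (-1) = 0 := by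
  have h := u.map_mul' (-1) (-1)
  rw [neg_one_mul, neg_neg, val_one] at h
  have h1 : u.toFun (-1 : R) ≠ ⊤ := u.ne_top' _ (neg_ne_zero.mpr one_ne_zero)
  lift u.toFun (-1 : R) to Γ using h1 with b hb
  have h2 : b + b = 0 := by exact_mod_cast h.symm
  exact_mod_cast gamma_two_zero h2

lemma val_neg (f : R) : u.toFun (-f) = u.toFun f := by
  rw [show -f = -1 * f by ring, u.map_mul', val_neg_one, zero_add]

lemma val_pow (f : R) (n : ℕ) : u.toFun (f ^ n) = n • u.toFun f := by
  induction n with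
  | zero => rw [pow_zero, val_one, zero_nsmul]
  | succ n ih => rw [pow_succ, u.map_mul', ih, succ_nsmul]

lemma val_sub_ge (f g : R) : min (u.toFun f) (u.toFun g) ≤ u.toFun (f - g) := by
  have h := u.add_min' f (-g)
  rw [val_neg] at h
  rw [sub_eq_add_neg]
  exact h

lemma val_add_eq_left {f g : R} (h : u.toFun f < u.toFun g) :
    u.toFun (f + g) = u.toFun f := by
  have hge : u.toFun f ≤ u.toFun (f + g) := by
    have := u.add_min' f g
    rwa [min_eq_left h.le] at this
  have h2 : min (u.toFun (f + g)) (u.toFun g) ≤ u.toFun f := by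
    have h3 := u.val_sub_ge (f + g) g
    rwa [show f + g - g = f by ring] at h3
  rcases le_or_gt (u.toFun (f + g)) (u.toFun g) with hh | hh
  · rw [min_eq_left hh] at h2
    exact le_antisymm h2 hge
  · rw [min_eq_right hh.le] at h2
    exact absurd h2 (not_le.mpr h)

lemma val_sum_ge {ι : Type*} (t : Finset ι) (f : ι → R) {c : WithTop Γ}
    (hc : ∀ x ∈ t, c ≤ u.toFun (f x)) : c ≤ u.toFun (∑ x ∈ t, f x) := by
  classical
  induction t using Finset.induction_on with
  | empty => rw [Finset.sum_empty, u.map_zero']; exact le_top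
  | insert a s hni ih =>
    rw [Finset.sum_insert hni]
    refine le_trans (le_min (hc a (Finset.mem_insert_self a s))
      (ih fun x hx => hc x (Finset.mem_insert_of_mem hx))) (u.add_min' _ _)

lemma val_sum_gt {ι : Type*} (t : Finset ι) (f : ι → R) {c : WithTop Γ}
    (hct : c ≠ ⊤) (hc : ∀ x ∈ t, c < u.toFun (f x)) :
    c < u.toFun (∑ x ∈ t, f x) := by
  classical
  induction t using Finset.induction_on with
  | empty => rw [Finset.sum_empty, u.map_zero']; exact hct.lt_top
  | insert a s hni ih =>
    rw [Finset.sum_insert hni]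
    refine lt_of_lt_of_le (lt_min (hc a (Finset.mem_insert_self a s))
      (ih fun x hx => hc x (Finset.mem_insert_of_mem hx))) (u.add_min' _ _)

lemma val_sum_eq {ι : Type*} (t : Finset ι) (f : ι → R) {x0 : ι} (hx0 : x0 ∈ t)
    (hne : u.toFun (f x0) ≠ ⊤)
    (hlt : ∀ y ∈ t, y ≠ x0 → u.toFun (f x0) < u.toFun (f y)) :
    u.toFun (∑ x ∈ t, f x) = u.toFun (f x0) := by
  classical
  rw [← Finset.add_sum_erase t f hx0]
  rcases (t.erase x0).eq_empty_or_nonempty with he | _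
  · rw [he, Finset.sum_empty, add_zero]
  · exact u.val_add_eq_left (u.val_sum_gt _ _ hne fun y hy =>
      hlt y (Finset.mem_of_mem_erase hy) (Finset.ne_of_mem_erase hy))

lemma val_multiset_prod (m : Multiset R) :
    u.toFun m.prod = (m.map u.toFun).sum := by
  induction m using Multiset.induction_on with
  | empty => simp [val_one]
  | cons a s ih => rw [Multiset.prod_cons, u.map_mul', ih, Multiset.map_cons, Multiset.sum_cons]

end ValOn

private lemma multiset_sup_attained {α β : Type*} [LinearOrder β] [OrderBot β]
    (m : Multiset α) (f : α → β) : m ≠ 0 → ∃ x ∈ m, (m.map f).sup = f x := by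
  induction m using Multiset.induction_on with
  | empty => intro h; exact absurd rfl h
  | cons a s ih =>
    intro _
    rcases eq_or_ne s 0 with h0 | h0
    · subst h0
      exact ⟨a, Multiset.mem_cons_self a 0, by simp⟩
    · obtain ⟨x, hx, hsup⟩ := ih h0
      rw [Multiset.map_cons, Multiset.sup_cons, hsup]
      rcases le_total (f a) (f x) with h | h
      · exact ⟨x, Multiset.mem_cons_of_mem hx, sup_eq_right.mpr h⟩
      · exact ⟨a, Multiset.mem_cons_self a s, sup_eq_left.mpr h⟩

section Expansion

variable {K : Type*} [Field K]

private lemma divByMonic_pow_succ (Q : Polynomial K) (hQ : Q.Monic) (s : ℕ) (f : Polynomial K) :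
    f /ₘ Q ^ (s + 1) = (f /ₘ Q) /ₘ Q ^ s := by
  have hQs : (Q ^ s).Monic := hQ.pow s
  have hQs1 : (Q ^ (s + 1)).Monic := hQ.pow (s + 1)
  rcases eq_or_ne Q.degree 0 with hd0 | hd0
  · -- degree Q = 0 and monic means Q = 1
    have : Q = 1 := hQ.degree_le_zero_iff_eq_one.mp (le_of_eq hd0)
    subst this
    simp [Polynomial.divByMonic_one, one_pow]
  · have hdpos : 0 < Q.degree := lt_of_le_of_ne (zero_le_degree_iff.mpr hQ.ne_zero) (Ne.symm hd0)
    set q2 := (f /ₘ Q) /ₘ Q ^ s with hq2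
    set r1 := (f /ₘ Q) %ₘ Q ^ s with hr1
    set r0 := f %ₘ Q with hr0
    have key : (Q * r1 + r0) + Q ^ (s + 1) * q2 = f := by
      have h1 : r0 + Q * (f /ₘ Q) = f := Polynomial.modByMonic_add_div f Q
      have h2 : r1 + Q ^ s * q2 = f /ₘ Q := Polynomial.modByMonic_add_div (f /ₘ Q) (Q ^ s)
      calc (Q * r1 + r0) + Q ^ (s + 1) * q2
          = r0 + Q * (r1 + Q ^ s * q2) := by ring
        _ = r0 + Q * (f /ₘ Q) := by rw [h2]
        _ = f := h1
    have hdeg : (Q * r1 + r0).degree < (Q ^ (s + 1)).degree := by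
      have hd1 : (Q ^ (s + 1)).degree = Q.degree + (Q ^ s).degree := by
        rw [pow_succ, mul_comm, Polynomial.degree_mul]
      have hr0d : r0.degree < (Q ^ (s + 1)).degree := by
        refine lt_of_lt_of_le (Polynomial.degree_modByMonic_lt f hQ) ?_
        rw [hd1]
        exact le_add_of_nonneg_right (zero_le_degree_iff.mpr hQs.ne_zero)
      have hQr1 : (Q * r1).degree < (Q ^ (s + 1)).degree := by
        rcases eq_or_ne r1 0 with h | h
        · rw [h, mul_zero, Polynomial.degree_zero]
          exact lt_of_le_of_lt bot_le hr0d
        · rw [Polynomial.degree_mul, hd1]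
          have := Polynomial.degree_modByMonic_lt (f /ₘ Q) hQs
          exact WithBot.add_lt_add_left
            (fun hb => hQ.ne_zero (Polynomial.degree_eq_bot.mp hb)) this
      exact lt_of_le_of_lt (Polynomial.degree_add_le _ _) (max_lt hQr1 hr0d)
    exact (Polynomial.div_modByMonic_unique q2 (Q * r1 + r0) hQs1 ⟨key, hdeg⟩).1

private lemma expansion_sum (Q : Polynomial K) (hQ : Q.Monic) (hQd : 0 < Q.degree) :
    ∀ n (f : Polynomial K), f.natDegree ≤ n →
      ∑ s ∈ Finset.range (n + 1), (f /ₘ Q ^ s) %ₘ Q * Q ^ s = f := by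
  intro n
  induction n with
  | zero =>
    intro f hf
    have hdeg : f.degree < Q.degree :=
      lt_of_le_of_lt (le_trans Polynomial.degree_le_natDegree (by exact_mod_cast Nat.cast_le.mpr hf)) hQd
    simp [Polynomial.divByMonic_one, (Polynomial.modByMonic_eq_self_iff hQ).mpr hdeg]
  | succ n ih =>
    intro f hf
    rw [Finset.sum_range_succ' _ (n + 1)]
    have h0 : f /ₘ Q ^ 0 %ₘ Q * Q ^ 0 = f %ₘ Q := by
      simp [Polynomial.divByMonic_one]
    have hterm : ∀ s : ℕ, f /ₘ Q ^ (s + 1) %ₘ Q * Q ^ (s + 1)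
        = ((f /ₘ Q) /ₘ Q ^ s %ₘ Q * Q ^ s) * Q := by
      intro s
      rw [divByMonic_pow_succ Q hQ s f, pow_succ]
      ring
    have hfq : (f /ₘ Q).natDegree ≤ n := by
      rcases eq_or_ne (f /ₘ Q) 0 with h | h
      · rw [h]; simp
      · have hfne : f ≠ 0 := fun hh => h (by rw [hh, Polynomial.zero_divByMonic])
        have := Polynomial.degree_divByMonic_lt f Q hfne hQd
        have h2 := Polynomial.natDegree_lt_natDegree h this
        omega
    calc (∑ s ∈ Finset.range (n + 1), f /ₘ Q ^ (s + 1) %ₘ Q * Q ^ (s + 1)) + f /ₘ Q ^ 0 %ₘ Q * Q ^ 0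
        = (∑ s ∈ Finset.range (n + 1), (f /ₘ Q) /ₘ Q ^ s %ₘ Q * Q ^ s) * Q + f %ₘ Q := by
          rw [h0]
          congr 1
          rw [Finset.sum_mul]
          exact Finset.sum_congr rfl fun s _ => hterm s
      _ = (f /ₘ Q) * Q + f %ₘ Q := by rw [ih (f /ₘ Q) hfq]
      _ = f := by
          have := Polynomial.modByMonic_add_div f Q
          linear_combination this

end Expansion

end Helpers

section Uval

open Polynomial

variable {Γ : Type*} [AddCommGroup Γ] [LinearOrder Γ] [IsOrderedAddMonoid Γ]
variable {L : Type*} [Field L]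

/-- Weighted Gauss functional: `min_j (v̄(c_j) + j τ0)` over the coefficients. -/
noncomputable def uval (vbar : ValOn L Γ) (τ0 : WithTop Γ) (P : Polynomial L) : WithTop Γ :=
  (Finset.range (P.natDegree + 1)).inf fun j => vbar.toFun (P.coeff j) + j • τ0

/-- `a` is the least index attaining the minimum in `uval`. -/
def IsLead (vbar : ValOn L Γ) (τ0 : WithTop Γ) (P : Polynomial L) (a : ℕ) : Prop :=
  vbar.toFun (P.coeff a) + a • τ0 = uval vbar τ0 P ∧
  ∀ j < a, uval vbar τ0 P < vbar.toFun (P.coeff j) + j • τ0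

variable (vbar : ValOn L Γ) (τ0 : WithTop Γ)

lemma uval_le (P : Polynomial L) (j : ℕ) :
    uval vbar τ0 P ≤ vbar.toFun (P.coeff j) + j • τ0 := by
  rcases le_or_gt j P.natDegree with h | h
  · exact Finset.inf_le (Finset.mem_range.mpr (by omega))
  · rw [Polynomial.coeff_eq_zero_of_natDegree_lt h, vbar.map_zero', top_add]
    exact le_top

lemma uval_ne_top (hτ : τ0 ≠ ⊤) {P : Polynomial L} (hP : P ≠ 0) :
    uval vbar τ0 P ≠ ⊤ := by
  have h1 : vbar.toFun (P.coeff P.natDegree) + P.natDegree • τ0 ≠ ⊤ :=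
    WithTop.add_ne_top.mpr ⟨vbar.ne_top' _ (Polynomial.leadingCoeff_ne_zero.mpr hP),
      wt_smul_ne_top hτ⟩
  intro h
  exact h1 (top_le_iff.mp (h ▸ uval_le vbar τ0 P P.natDegree))

lemma exists_isLead (P : Polynomial L) : ∃ a, IsLead vbar τ0 P a := by
  classical
  obtain ⟨j0, _, hj0⟩ := Finset.exists_mem_eq_inf (Finset.range (P.natDegree + 1))
    ⟨0, Finset.mem_range.mpr (by omega)⟩ (fun j => vbar.toFun (P.coeff j) + j • τ0)
  have hex : ∃ j, vbar.toFun (P.coeff j) + j • τ0 = uval vbar τ0 P := ⟨j0, hj0.symm⟩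
  refine ⟨Nat.find hex, Nat.find_spec hex, fun j hj => ?_⟩
  exact lt_of_le_of_ne (uval_le vbar τ0 P j) fun h => Nat.find_min hex hj h.symm

lemma uval_one : uval vbar τ0 (1 : Polynomial L) = 0 := by
  unfold uval
  rw [Polynomial.natDegree_one]
  rw [Finset.range_one, Finset.inf_singleton]
  simp [ValOn.val_one vbar]

lemma uval_C (c : L) : uval vbar τ0 (C c) = vbar.toFun c := by
  unfold uval
  rw [Polynomial.natDegree_C]
  rw [Finset.range_one, Finset.inf_singleton]
  simp

lemma uval_linear (c : L) : uval vbar τ0 (X + C c) = min (vbar.toFun c) τ0 := by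
  unfold uval
  rw [Polynomial.natDegree_X_add_C]
  rw [Finset.range_add_one, Finset.inf_insert, Finset.range_one, Finset.inf_singleton]
  have h0 : (X + C c).coeff 0 = c := by simp
  have h1 : (X + C c).coeff 1 = 1 := by simp
  rw [h0, h1, ValOn.val_one vbar, zero_add, one_nsmul, zero_nsmul, add_zero]
  rw [min_comm]

lemma uval_mul (hτ : τ0 ≠ ⊤) {A B : Polynomial L} (hA : A ≠ 0) (hB : B ≠ 0)
    {a b : ℕ} (ha : IsLead vbar τ0 A a) (hb : IsLead vbar τ0 B b) :
    uval vbar τ0 (A * B) = uval vbar τ0 A + uval vbar τ0 B ∧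
      IsLead vbar τ0 (A * B) (a + b) := by
  classical
  have hvA : uval vbar τ0 A ≠ ⊤ := uval_ne_top vbar τ0 hτ hA
  have hvB : uval vbar τ0 B ≠ ⊤ := uval_ne_top vbar τ0 hτ hB
  set vA := uval vbar τ0 A with hvAd
  set vB := uval vbar τ0 B with hvBd
  have hv : vA + vB ≠ ⊤ := WithTop.add_ne_top.mpr ⟨hvA, hvB⟩
  have hterm : ∀ i k : ℕ,
      vA + vB ≤ vbar.toFun (A.coeff i * B.coeff k) + (i + k) • τ0 := by
    intro i k
    calc vA + vB ≤ (vbar.toFun (A.coeff i) + i • τ0) + (vbar.toFun (B.coeff k) + k • τ0) :=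
          add_le_add (uval_le vbar τ0 A i) (uval_le vbar τ0 B k)
      _ = vbar.toFun (A.coeff i * B.coeff k) + (i + k) • τ0 := by
          rw [vbar.map_mul', add_nsmul, add_add_add_comm]
  have htermlt : ∀ i k : ℕ, i < a ∨ k < b →
      vA + vB < vbar.toFun (A.coeff i * B.coeff k) + (i + k) • τ0 := by
    intro i k hik
    have h2 : vA + vB < (vbar.toFun (A.coeff i) + i • τ0) + (vbar.toFun (B.coeff k) + k • τ0) := by
      rcases hik with h | h
      · exact wt_add_lt_add (ha.2 i h) (uval_le vbar τ0 B k) hv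
      · exact wt_add_lt_add' (uval_le vbar τ0 A i) (hb.2 k h) hv
    calc vA + vB < _ := h2
      _ = vbar.toFun (A.coeff i * B.coeff k) + (i + k) • τ0 := by
          rw [vbar.map_mul', add_nsmul, add_add_add_comm]
  have hcoeff : ∀ j : ℕ, vA + vB ≤ vbar.toFun ((A * B).coeff j) + j • τ0 := by
    intro j
    rw [Polynomial.coeff_mul]
    obtain ⟨x, hxm, hxinf⟩ := Finset.exists_mem_eq_inf (Finset.HasAntidiagonal.antidiagonal j)
      ⟨(0, j), by simp⟩ (fun x => vbar.toFun (A.coeff x.1 * B.coeff x.2))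
    have h1 : vbar.toFun (A.coeff x.1 * B.coeff x.2)
        ≤ vbar.toFun (∑ y ∈ Finset.HasAntidiagonal.antidiagonal j, A.coeff y.1 * B.coeff y.2) := by
      rw [← hxinf]
      exact vbar.val_sum_ge _ _ fun y hy => Finset.inf_le hy
    have hx12 : x.1 + x.2 = j := Finset.HasAntidiagonal.mem_antidiagonal.mp hxm
    calc vA + vB ≤ vbar.toFun (A.coeff x.1 * B.coeff x.2) + (x.1 + x.2) • τ0 := hterm x.1 x.2
      _ = vbar.toFun (A.coeff x.1 * B.coeff x.2) + j • τ0 := by rw [hx12]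
      _ ≤ _ := add_le_add h1 le_rfl
  have hstrict : ∀ j : ℕ, j < a + b → vA + vB < vbar.toFun ((A * B).coeff j) + j • τ0 := by
    intro j hj
    rw [Polynomial.coeff_mul]
    obtain ⟨x, hxm, hxinf⟩ := Finset.exists_mem_eq_inf (Finset.HasAntidiagonal.antidiagonal j)
      ⟨(0, j), by simp⟩ (fun x => vbar.toFun (A.coeff x.1 * B.coeff x.2))
    have h1 : vbar.toFun (A.coeff x.1 * B.coeff x.2)
        ≤ vbar.toFun (∑ y ∈ Finset.HasAntidiagonal.antidiagonal j, A.coeff y.1 * B.coeff y.2) := by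
      rw [← hxinf]
      exact vbar.val_sum_ge _ _ fun y hy => Finset.inf_le hy
    have hx12 : x.1 + x.2 = j := Finset.HasAntidiagonal.mem_antidiagonal.mp hxm
    have hik : x.1 < a ∨ x.2 < b := by omega
    calc vA + vB < vbar.toFun (A.coeff x.1 * B.coeff x.2) + (x.1 + x.2) • τ0 :=
          htermlt x.1 x.2 hik
      _ = vbar.toFun (A.coeff x.1 * B.coeff x.2) + j • τ0 := by rw [hx12]
      _ ≤ _ := add_le_add h1 le_rfl
  have hAane : vbar.toFun (A.coeff a) ≠ ⊤ :=
    (WithTop.add_ne_top.mp (by rw [ha.1]; exact hvA)).1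
  have hBbne : vbar.toFun (B.coeff b) ≠ ⊤ :=
    (WithTop.add_ne_top.mp (by rw [hb.1]; exact hvB)).1
  have habne : vbar.toFun (A.coeff a * B.coeff b) ≠ ⊤ := by
    rw [vbar.map_mul']
    exact WithTop.add_ne_top.mpr ⟨hAane, hBbne⟩
  have habeq : vbar.toFun (A.coeff a * B.coeff b) + (a + b) • τ0 = vA + vB := by
    rw [vbar.map_mul', add_nsmul, add_add_add_comm, ha.1, hb.1]
  have hat : vbar.toFun ((A * B).coeff (a + b)) + (a + b) • τ0 = vA + vB := by
    rw [Polynomial.coeff_mul]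
    have hab : ((a, b) : ℕ × ℕ) ∈ Finset.HasAntidiagonal.antidiagonal (a + b) := by simp
    have hsum := vbar.val_sum_eq (Finset.HasAntidiagonal.antidiagonal (a + b))
      (fun y => A.coeff y.1 * B.coeff y.2) hab habne ?_
    · rw [hsum]
      exact habeq
    · intro y hy hyne
      have hy12 : y.1 + y.2 = a + b := Finset.HasAntidiagonal.mem_antidiagonal.mp hy
      have hik : y.1 < a ∨ y.2 < b := by
        rcases Nat.lt_trichotomy y.1 a with h | h | h
        · exact Or.inl h
        · exact absurd (Prod.ext h (by omega)) hyne
        · omega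
      have h2 := htermlt y.1 y.2 hik
      rw [hy12, ← habeq] at h2
      exact (WithTop.add_lt_add_iff_right (wt_smul_ne_top hτ)).mp h2
  have huv : uval vbar τ0 (A * B) = vA + vB :=
    le_antisymm (le_trans (uval_le vbar τ0 (A * B) (a + b)) (le_of_eq hat))
      (Finset.le_inf fun j _ => hcoeff j)
  refine ⟨huv, ?_, ?_⟩
  · rw [huv]; exact hat
  · intro j hj; rw [huv]; exact hstrict j hj

lemma uval_pow (hτ : τ0 ≠ ⊤) {A : Polynomial L} (hA : A ≠ 0) {a : ℕ}
    (ha : IsLead vbar τ0 A a) (s : ℕ) :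
    uval vbar τ0 (A ^ s) = s • uval vbar τ0 A ∧ IsLead vbar τ0 (A ^ s) (s * a) := by
  induction s with
  | zero =>
    refine ⟨by rw [pow_zero, zero_nsmul, uval_one], ?_, ?_⟩
    · rw [pow_zero, Nat.zero_mul, uval_one, Polynomial.coeff_one]
      simp [ValOn.val_one vbar]
    · intro j hj; omega
  | succ s ih =>
    have h := uval_mul vbar τ0 hτ (pow_ne_zero s hA) hA ih.2 ha
    refine ⟨?_, ?_⟩
    · rw [pow_succ, h.1, ih.1, succ_nsmul]
    · have he : (s + 1) * a = s * a + a := by ring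
      rw [pow_succ, he]
      exact h.2

end Uval

section Key

open Polynomial

variable {Γ : Type*} [AddCommGroup Γ] [LinearOrder Γ] [IsOrderedAddMonoid Γ]
variable {K : Type*} [Field K] {L : Type*} [Field L] [Algebra K L] [IsAlgClosed L]
variable (vbar : ValOn L Γ) (wbar : ValOn (Polynomial L) Γ)

private lemma vbar_sub_ge (hC : ∀ c : L, wbar.toFun (C c) = vbar.toFun c) (θ β : L) :
    min (wbar.toFun (X - C θ)) (wbar.toFun (X - C β)) ≤ vbar.toFun (β - θ) := by
  have h : (X - C θ) - (X - C β) = (C (β - θ) : Polynomial L) := by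
    rw [map_sub]
    ring
  have h2 := wbar.val_sub_ge (X - C θ) (X - C β)
  rwa [h, hC] at h2

private lemma vbar_sub_eq (hC : ∀ c : L, wbar.toFun (C c) = vbar.toFun c) {θ β : L}
    (h : wbar.toFun (X - C θ) < wbar.toFun (X - C β)) :
    vbar.toFun (β - θ) = wbar.toFun (X - C θ) := by
  have hge : wbar.toFun (X - C θ) ≤ vbar.toFun (β - θ) := by
    have h2 := vbar_sub_ge vbar wbar hC θ β
    rwa [min_eq_left h.le] at h2
  rcases lt_or_eq_of_le hge with hgt | heq
  · exfalso
    have hX : (X - C θ) = (X - C β) + (C (β - θ) : Polynomial L) := by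
      rw [map_sub]
      ring
    have h2 : min (wbar.toFun (X - C β)) (wbar.toFun (C (β - θ))) ≤ wbar.toFun (X - C θ) := by
      conv_rhs => rw [hX]
      exact wbar.add_min' _ _
    rw [hC] at h2
    rcases min_le_iff.mp h2 with h3 | h3
    · exact absurd h3 (not_le.mpr h)
    · exact absurd h3 (not_le.mpr hgt)
  · exact heq.symm

private lemma nu_prod (ν : Polynomial L → WithTop Γ)
    (hmul : ∀ A B : Polynomial L, A ≠ 0 → B ≠ 0 → ν (A * B) = ν A + ν B)
    (c : L) (hc : c ≠ 0) (m : Multiset L) :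
    ν (C c * (m.map fun θ => X - C θ).prod)
      = ν (C c) + (m.map fun θ => ν (X - C θ)).sum := by
  induction m using Multiset.induction_on with
  | empty => simp
  | cons θ s ih =>
    rw [Multiset.map_cons, Multiset.prod_cons, Multiset.map_cons, Multiset.sum_cons]
    have hprodne : (Multiset.map (fun θ => X - C θ) s).prod ≠ 0 := by
      apply Multiset.prod_ne_zero
      intro h
      obtain ⟨θ', _, hθ'⟩ := Multiset.mem_map.mp h
      exact X_sub_C_ne_zero θ' hθ'
    have hCcne : (C c : Polynomial L) ≠ 0 := by simpa using hc
    rw [mul_left_comm, hmul _ _ (X_sub_C_ne_zero θ) (mul_ne_zero hCcne hprodne), ih,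
      add_left_comm]

private lemma wbar_roots (hC : ∀ c : L, wbar.toFun (C c) = vbar.toFun c)
    {P : Polynomial L} (hP : P ≠ 0) :
    wbar.toFun P = vbar.toFun P.leadingCoeff
      + (P.roots.map fun θ => wbar.toFun (X - C θ)).sum := by
  conv_lhs => rw [(IsAlgClosed.splits P).eq_prod_roots]
  rw [nu_prod wbar.toFun (fun A B _ _ => wbar.map_mul' A B) _ (leadingCoeff_ne_zero.mpr hP), hC]

private lemma key_ineq (hC : ∀ c : L, wbar.toFun (C c) = vbar.toFun c)
    (φ g : Polynomial K) (hφ : φ ≠ 0) (hg : g.Monic) (hgdeg : 0 < g.degree)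
    (βs : L) (τ0 : WithTop Γ) (hτ0 : τ0 ≠ ⊤)
    (hβroot : (g.map (algebraMap K L)).IsRoot βs)
    (hβτ : τ0 ≤ wbar.toFun (X - C βs))
    (hφroots : ∀ θ ∈ (φ.map (algebraMap K L)).roots, wbar.toFun (X - C θ) ≤ τ0)
    (hsmall : ∀ h : Polynomial K, h ≠ 0 → h.degree < g.degree →
      ∀ θ ∈ (h.map (algebraMap K L)).roots, wbar.toFun (X - C θ) < τ0)
    (s : ℕ) :
    wbar.toFun (φ.map (algebraMap K L)) ≤
      wbar.toFun (((φ /ₘ g ^ s) %ₘ g).map (algebraMap K L))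
        + s • wbar.toFun (g.map (algebraMap K L)) := by
  classical
  set A := algebraMap K L with hA
  set G := g.map A with hG
  have hGm : G.Monic := hg.map A
  have hGne : G ≠ 0 := hGm.ne_zero
  set U : Polynomial L → WithTop Γ := fun P => uval vbar τ0 (taylor βs P) with hU
  have htay : ∀ P : Polynomial L, P ≠ 0 → taylor βs P ≠ 0 := by
    intro P hP h
    have h2 := congrArg (⇑(taylor (-βs))) h
    rw [taylor_taylor, neg_add_cancel, taylor_zero, map_zero] at h2
    exact hP h2
  have hUne : ∀ P : Polynomial L, P ≠ 0 → U P ≠ ⊤ := fun P hP =>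
    uval_ne_top vbar τ0 hτ0 (htay P hP)
  have hUmul : ∀ P Q : Polynomial L, P ≠ 0 → Q ≠ 0 → U (P * Q) = U P + U Q := by
    intro P Q hP hQ
    obtain ⟨p, hp⟩ := exists_isLead vbar τ0 (taylor βs P)
    obtain ⟨q, hq⟩ := exists_isLead vbar τ0 (taylor βs Q)
    have h := uval_mul vbar τ0 hτ0 (htay P hP) (htay Q hQ) hp hq
    show uval vbar τ0 (taylor βs (P * Q)) = _
    rw [taylor_mul]
    exact h.1
  have hUC : ∀ c : L, U (C c) = vbar.toFun c := by
    intro c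
    show uval vbar τ0 (taylor βs (C c)) = _
    rw [taylor_C]
    exact uval_C vbar τ0 c
  have hUlin : ∀ θ : L, U (X - C θ) = min (vbar.toFun (βs - θ)) τ0 := by
    intro θ
    show uval vbar τ0 (taylor βs (X - C θ)) = _
    have h1 : taylor βs ((X : Polynomial L) - C θ) = X + C (βs - θ) := by
      rw [map_sub, taylor_X, taylor_C, map_sub]
      ring
    rw [h1, uval_linear]
  have hUroots : ∀ P : Polynomial L, P ≠ 0 → U P = vbar.toFun P.leadingCoeff
      + (P.roots.map fun θ => U (X - C θ)).sum := by
    intro P hP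
    conv_lhs => rw [(IsAlgClosed.splits P).eq_prod_roots]
    rw [nu_prod U hUmul _ (leadingCoeff_ne_zero.mpr hP), hUC]
  have hsmall' : ∀ h : Polynomial K, h ≠ 0 → h.degree < g.degree →
      ∀ θ ∈ (h.map A).roots, vbar.toFun (βs - θ) = wbar.toFun (X - C θ) ∧
        U (X - C θ) = wbar.toFun (X - C θ) := by
    intro h hne hdeg θ hθ
    have ht1 : wbar.toFun (X - C θ) < τ0 := hsmall h hne hdeg θ hθ
    have ht2 : wbar.toFun (X - C θ) < wbar.toFun (X - C βs) := lt_of_lt_of_le ht1 hβτ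
    have he := vbar_sub_eq vbar wbar hC ht2
    refine ⟨he, ?_⟩
    rw [hUlin θ, he, min_eq_left ht1.le]
  have hUK : ∀ h : Polynomial K, h ≠ 0 → h.degree < g.degree →
      U (h.map A) = wbar.toFun (h.map A) := by
    intro h hne hdeg
    have hmne : h.map A ≠ 0 := Polynomial.map_ne_zero hne
    rw [hUroots _ hmne, wbar_roots vbar wbar hC hmne]
    congr 1
    apply congrArg Multiset.sum
    exact Multiset.map_congr rfl fun θ hθ => (hsmall' h hne hdeg θ hθ).2
  have hlead0 : ∀ h : Polynomial K, h ≠ 0 → h.degree < g.degree →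
      IsLead vbar τ0 (taylor βs (h.map A)) 0 := by
    intro h hne hdeg
    have hmne : h.map A ≠ 0 := Polynomial.map_ne_zero hne
    constructor
    · rw [taylor_coeff_zero, zero_nsmul, add_zero]
      have heval : vbar.toFun (Polynomial.eval βs (h.map A)) = wbar.toFun (h.map A) := by
        conv_lhs => rw [(IsAlgClosed.splits (h.map A)).eq_prod_roots]
        rw [Polynomial.eval_mul, Polynomial.eval_C, vbar.map_mul',
          Polynomial.eval_multiset_prod, Multiset.map_map, vbar.val_multiset_prod,
          Multiset.map_map, wbar_roots vbar wbar hC hmne]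
        congr 1
        apply congrArg Multiset.sum
        apply Multiset.map_congr rfl
        intro θ hθ
        simp only [Function.comp_apply, Polynomial.eval_sub, Polynomial.eval_X,
          Polynomial.eval_C]
        exact (hsmall' h hne hdeg θ hθ).1
      show vbar.toFun (Polynomial.eval βs (h.map A)) = uval vbar τ0 (taylor βs (h.map A))
      rw [heval, ← hUK h hne hdeg]
    · intro j hj
      omega
  obtain ⟨lg, hlg⟩ := exists_isLead vbar τ0 (taylor βs G)
  have hlg1 : 1 ≤ lg := by
    rcases Nat.eq_zero_or_pos lg with h0 | h1
    · exfalso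
      have h2 := hlg.1
      rw [h0, taylor_coeff_zero, show Polynomial.eval βs G = 0 from hβroot, vbar.map_zero',
        zero_nsmul, add_zero] at h2
      exact hUne G hGne h2.symm
    · exact h1
  have hUg_le : U G ≤ wbar.toFun G := by
    rw [hUroots G hGne, wbar_roots vbar wbar hC hGne]
    refine add_le_add le_rfl (Multiset.sum_map_le_sum_map _ _ fun α hα => ?_)
    rw [hUlin]
    rcases lt_or_ge (wbar.toFun (X - C α)) τ0 with h | h
    · have h2 : wbar.toFun (X - C α) < wbar.toFun (X - C βs) := lt_of_lt_of_le h hβτ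
      rw [vbar_sub_eq vbar wbar hC h2]
      exact min_le_left _ _
    · exact le_trans (min_le_right _ _) h
  set Φ := φ.map A with hΦdef
  have hΦne : Φ ≠ 0 := Polynomial.map_ne_zero hφ
  have hUφ_ge : wbar.toFun Φ ≤ U Φ := by
    rw [hUroots Φ hΦne, wbar_roots vbar wbar hC hΦne]
    refine add_le_add le_rfl (Multiset.sum_map_le_sum_map _ _ fun θ hθ => ?_)
    rw [hUlin]
    refine le_min ?_ (hφroots θ hθ)
    have h1 : wbar.toFun (X - C θ) ≤ wbar.toFun (X - C βs) :=
      le_trans (hφroots θ hθ) hβτ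
    calc wbar.toFun (X - C θ)
        = min (wbar.toFun (X - C θ)) (wbar.toFun (X - C βs)) := (min_eq_left h1).symm
      _ ≤ vbar.toFun (βs - θ) := vbar_sub_ge vbar wbar hC θ βs
  set N := φ.natDegree with hN
  set cs : ℕ → Polynomial K := fun k => (φ /ₘ g ^ k) %ₘ g with hcs
  have hcsdeg : ∀ k, (cs k).degree < g.degree := fun k =>
    Polynomial.degree_modByMonic_lt _ hg
  have hexp : ∑ k ∈ Finset.range (N + 1), cs k * g ^ k = φ :=
    expansion_sum g hg hgdeg N φ le_rfl
  rcases eq_or_ne (cs s) 0 with hzs | hzs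
  · have hzz : ((φ /ₘ g ^ s) %ₘ g).map A = 0 := by
      have : (φ /ₘ g ^ s) %ₘ g = 0 := hzs
      rw [this, Polynomial.map_zero]
    rw [hzz, wbar.map_zero', top_add]
    exact le_top
  have hsN : s ≤ N := by
    by_contra hh
    push_neg at hh
    apply hzs
    have hgn : 1 ≤ g.natDegree := natDegree_pos_iff_degree_pos.mpr hgdeg
    have hdiv : φ /ₘ g ^ s = 0 := by
      rw [Polynomial.divByMonic_eq_zero_iff (hg.pow s)]
      have h3 : (g ^ s).degree = ((s * g.natDegree : ℕ) : WithBot ℕ) := by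
        rw [Polynomial.degree_eq_natDegree (pow_ne_zero s hg.ne_zero),
          Polynomial.natDegree_pow]
      rw [h3]
      refine lt_of_le_of_lt Polynomial.degree_le_natDegree ?_
      exact_mod_cast (by nlinarith : φ.natDegree < s * g.natDegree)
    show (φ /ₘ g ^ s) %ₘ g = 0
    rw [hdiv, Polynomial.zero_modByMonic]
  set S := (Finset.range (N + 1)).filter (fun k => cs k ≠ 0) with hS
  have hsS : s ∈ S := Finset.mem_filter.mpr ⟨Finset.mem_range.mpr (by omega), hzs⟩
  set H : ℕ → Polynomial L := fun k => (cs k * g ^ k).map A with hH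
  have hHne : ∀ k ∈ S, H k ≠ 0 := by
    intro k hk
    have h1 := (Finset.mem_filter.mp hk).2
    exact Polynomial.map_ne_zero (mul_ne_zero h1 (pow_ne_zero k hg.ne_zero))
  have hΦsum : Φ = ∑ k ∈ S, H k := by
    have h1 : Φ = ∑ k ∈ Finset.range (N + 1), H k := by
      rw [hΦdef, ← hexp, Polynomial.map_sum]
    rw [h1]
    refine (Finset.sum_subset (Finset.filter_subset _ _) ?_).symm
    intro x hx hxS
    have hcx : cs x = 0 := by
      by_contra hcx
      exact hxS (Finset.mem_filter.mpr ⟨hx, hcx⟩)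
    show (cs x * g ^ x).map A = 0
    rw [hcx, zero_mul, Polynomial.map_zero]
  have htaypow : ∀ (P : Polynomial L) (k : ℕ), taylor βs (P ^ k) = (taylor βs P) ^ k := by
    intro P k
    induction k with
    | zero => simp
    | succ k ih => rw [pow_succ, taylor_mul, ih, pow_succ]
  have hGlead := fun k => uval_pow vbar τ0 hτ0 (htay G hGne) hlg k
  have hHlead : ∀ k ∈ S, IsLead vbar τ0 (taylor βs (H k)) (k * lg) ∧
      uval vbar τ0 (taylor βs (H k)) = U ((cs k).map A) + k • U G := by
    intro k hk
    have hck : cs k ≠ 0 := (Finset.mem_filter.mp hk).2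
    have hcmne : (cs k).map A ≠ 0 := Polynomial.map_ne_zero hck
    have hHk : taylor βs (H k) = taylor βs ((cs k).map A) * (taylor βs G) ^ k := by
      show taylor βs ((cs k * g ^ k).map A) = _
      rw [Polynomial.map_mul, Polynomial.map_pow, taylor_mul, htaypow]
    have h := uval_mul vbar τ0 hτ0 (htay _ hcmne) (pow_ne_zero k (htay G hGne))
      (hlead0 (cs k) hck (hcsdeg k)) (hGlead k).2
    constructor
    · rw [hHk, show k * lg = 0 + k * lg by omega]
      exact h.2
    · rw [hHk, h.1, (hGlead k).1]
  obtain ⟨k1, hk1S, hk1⟩ := Finset.exists_mem_eq_inf S ⟨s, hsS⟩ (fun k => U (H k))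
  set c := S.inf fun k => U (H k) with hc
  set S' := S.filter (fun k => U (H k) = c) with hS'
  have hS'ne : S'.Nonempty := ⟨k1, Finset.mem_filter.mpr ⟨hk1S, hk1.symm⟩⟩
  set ks := S'.min' hS'ne with hks
  have hksS' : ks ∈ S' := S'.min'_mem hS'ne
  have hksS : ks ∈ S := (Finset.mem_filter.mp hksS').1
  have hksc : U (H ks) = c := (Finset.mem_filter.mp hksS').2
  have hcne : c ≠ ⊤ := by
    rw [← hksc]
    exact hUne _ (hHne ks hksS)
  set js := ks * lg with hjs
  have hksLead : IsLead vbar τ0 (taylor βs (H ks)) js := (hHlead ks hksS).1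
  have hcoeffs : (taylor βs Φ).coeff js = ∑ k ∈ S, (taylor βs (H k)).coeff js := by
    rw [hΦsum, map_sum, Polynomial.finset_sum_coeff]
  have hother : ∀ k ∈ S, k ≠ ks →
      vbar.toFun ((taylor βs (H ks)).coeff js)
        < vbar.toFun ((taylor βs (H k)).coeff js) := by
    intro k hk hkne
    have h1 : vbar.toFun ((taylor βs (H ks)).coeff js) + js • τ0 = c := by
      rw [hksLead.1]
      exact hksc
    have h2 : c < vbar.toFun ((taylor βs (H k)).coeff js) + js • τ0 := by
      rcases eq_or_ne (U (H k)) c with he | hne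
      · have hkS' : k ∈ S' := Finset.mem_filter.mpr ⟨hk, he⟩
        have hklt : ks < k := lt_of_le_of_ne (S'.min'_le k hkS') (fun h => hkne h.symm)
        have hjlt : js < k * lg := by
          rw [hjs]
          exact mul_lt_mul_of_pos_right hklt (by omega)
        have h3 : U (H k) < vbar.toFun ((taylor βs (H k)).coeff js) + js • τ0 :=
          (hHlead k hk).1.2 js hjlt
        rw [he] at h3
        exact h3
      · have hge : c ≤ U (H k) := Finset.inf_le hk
        have hlt : c < U (H k) := lt_of_le_of_ne hge (Ne.symm hne)
        exact lt_of_lt_of_le hlt (uval_le vbar τ0 (taylor βs (H k)) js)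
    rw [← h1] at h2
    exact (WithTop.add_lt_add_iff_right (wt_smul_ne_top hτ0)).mp h2
  have hksne : vbar.toFun ((taylor βs (H ks)).coeff js) ≠ ⊤ := by
    intro h
    apply hcne
    rw [← hksc]
    show uval vbar τ0 (taylor βs (H ks)) = ⊤
    rw [← hksLead.1, h, top_add]
  have hsumeq := vbar.val_sum_eq S (fun k => (taylor βs (H k)).coeff js) hksS hksne hother
  have hreg : U Φ ≤ c := by
    have h1 : U Φ ≤ vbar.toFun ((taylor βs Φ).coeff js) + js • τ0 :=
      uval_le vbar τ0 (taylor βs Φ) js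
    rw [hcoeffs, hsumeq] at h1
    have h2 : vbar.toFun ((taylor βs (H ks)).coeff js) + js • τ0 = c := by
      rw [hksLead.1]
      exact hksc
    rw [h2] at h1
    exact h1
  have hchain : U ((cs s).map A) + s • U G
      ≤ wbar.toFun ((cs s).map A) + s • wbar.toFun G := by
    rw [hUK (cs s) hzs (hcsdeg s)]
    exact add_le_add le_rfl (nsmul_le_nsmul_right hUg_le s)
  calc wbar.toFun Φ ≤ U Φ := hUφ_ge
    _ ≤ c := hreg
    _ ≤ U (H s) := Finset.inf_le hsS
    _ = U ((cs s).map A) + s • U G := (hHlead s hsS).2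
    _ ≤ wbar.toFun ((cs s).map A) + s • wbar.toFun G := hchain

end Key


/-- if `w = [W; φ, γ]` is a limit augmentation of an essential
continuous family `W = (ρ_i = [w'; χ_i, γ_i])_{i ∈ A}` of augmentations of `w'`,
then `φ` is an abstract key polynomial for `w` and `δ(χ_i) < δ(φ)` for all `i`. -/
theorem abkp_of_limit_augmentation
    {K : Type*} [Field K] {Γ : Type*} [AddCommGroup Γ] [LinearOrder Γ] [IsOrderedAddMonoid Γ]
    {L : Type*} [Field L] [Algebra K L] [IsAlgClosure K L]
    (v : ValOn K Γ) (vbar : ValOn L Γ)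
    (hvbar : ∀ c : K, vbar.toFun (algebraMap K L c) = v.toFun c)
    (w : ValOn (Polynomial K) Γ) (hext : Extends w v)
    (wbar : ValOn (Polynomial L) Γ) (hcomm : IsCommonExt wbar w vbar)
    (w' : ValOn (Polynomial K) Γ)
    (ι : Type*) [LinearOrder ι] (F : ContFamily w' ι)
    (hess : IsEssential F)
    (φ : Polynomial K) (γ : Γ) (haug : IsLimitAug F φ γ w) :
    IsABKP wbar φ ∧ ∀ i : ι, delta wbar (F.chi i) < delta wbar φ := by
  classical
  haveI : IsAlgClosed L := IsAlgClosure.isAlgClosed K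
  obtain ⟨hLKP, hγ, hlim⟩ := haug
  obtain ⟨hφm, hφuns, _⟩ := hLKP
  have hφne : φ ≠ 0 := hφm.ne_zero
  have hι : Nonempty ι := ⟨(hlim 1).choose⟩
  obtain ⟨iw⟩ := hι
  have hχφdeg : ∀ i : ι, (F.chi i).degree < φ.degree := fun i => hess.2 i φ hφuns
  have hχm : ∀ i : ι, (F.chi i).Monic := fun i => (F.aug i).1.1
  have hφpos : 0 < φ.degree :=
    lt_of_le_of_lt (Polynomial.zero_le_degree_iff.mpr (hχm iw).ne_zero) (hχφdeg iw)
  have hφnat : 0 < φ.natDegree := Polynomial.natDegree_pos_iff_degree_pos.mpr hφpos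
  have hφpow_le : ∀ s : ℕ, 1 ≤ s → φ.degree ≤ (φ ^ s).degree := by
    intro s hs
    rw [Polynomial.degree_eq_natDegree hφne,
      Polynomial.degree_eq_natDegree (pow_ne_zero s hφne), Polynomial.natDegree_pow]
    exact_mod_cast Nat.le_mul_of_pos_left _ (by omega)
  have hφpow_lt : ∀ s : ℕ, 2 ≤ s → φ.degree < (φ ^ s).degree := by
    intro s hs
    rw [Polynomial.degree_eq_natDegree hφne,
      Polynomial.degree_eq_natDegree (pow_ne_zero s hφne), Polynomial.natDegree_pow]
    exact_mod_cast (by nlinarith : φ.natDegree < s * φ.natDegree)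
  have hstab : ∀ h : Polynomial K, h.degree < φ.degree →
      ∃ i0 : ι, ∀ i, i0 ≤ i → (F.rho i).toFun h = w.toFun h := by
    intro h hdeg
    obtain ⟨i0, hi0⟩ := hlim h
    refine ⟨i0, fun i hi => ?_⟩
    rw [hi0 i hi]
    simp only [augVal]
    have hterm0 : h /ₘ φ ^ 0 %ₘ φ = h := by
      rw [pow_zero, Polynomial.divByMonic_one, (Polynomial.modByMonic_eq_self_iff hφm).mpr hdeg]
    apply le_antisymm
    · refine Finset.le_inf fun k _ => ?_
      rcases Nat.eq_zero_or_pos k with h0 | h1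
      · subst h0
        rw [hterm0, zero_nsmul, add_zero]
      · have hdiv : h /ₘ φ ^ k = 0 := by
          rw [Polynomial.divByMonic_eq_zero_iff (hφm.pow k)]
          exact lt_of_lt_of_le hdeg (hφpow_le k h1)
        rw [hdiv, Polynomial.zero_modByMonic, (F.rho i).map_zero', top_add]
        exact le_top
    · refine le_trans (Finset.inf_le
        (show (0 : ℕ) ∈ Finset.range (h.natDegree + 1) from Finset.mem_range.mpr (by omega))) ?_
      rw [hterm0, zero_nsmul, add_zero]
  have hdd : φ /ₘ φ = 1 ∧ φ %ₘ φ = 0 :=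
    Polynomial.div_modByMonic_unique 1 0 hφm
      ⟨by rw [mul_one, zero_add], by
        rw [Polynomial.degree_zero]
        exact Ne.bot_lt fun hb => hφne (Polynomial.degree_eq_bot.mp hb)⟩
  have h1m : (1 : Polynomial K) %ₘ φ = 1 :=
    (Polynomial.modByMonic_eq_self_iff hφm).mpr (by rw [Polynomial.degree_one]; exact hφpos)
  have hwφ : w.toFun φ = (γ : WithTop Γ) := by
    obtain ⟨i0, hi0⟩ := hlim φ
    rw [hi0 i0 le_rfl]
    simp only [augVal]
    apply le_antisymm
    · refine le_trans (Finset.inf_le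
        (show (1 : ℕ) ∈ Finset.range (φ.natDegree + 1) from Finset.mem_range.mpr (by omega))) ?_
      rw [pow_one, hdd.1, h1m, ValOn.val_one, zero_add, one_nsmul]
    · refine Finset.le_inf fun k _ => ?_
      match k with
      | 0 =>
        rw [pow_zero, Polynomial.divByMonic_one, hdd.2, (F.rho i0).map_zero', top_add]
        exact le_top
      | 1 =>
        rw [pow_one, hdd.1, h1m, ValOn.val_one, zero_add, one_nsmul]
      | (k + 2) =>
        have hdiv : φ /ₘ φ ^ (k + 2) = 0 := by
          rw [Polynomial.divByMonic_eq_zero_iff (hφm.pow _)]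
          exact hφpow_lt (k + 2) (by omega)
        rw [hdiv, Polynomial.zero_modByMonic, (F.rho i0).map_zero', top_add]
        exact le_top
  have hφmapne : φ.map (algebraMap K L) ≠ 0 := Polynomial.map_ne_zero hφne
  have hφrne : (φ.map (algebraMap K L)).roots ≠ 0 := by
    obtain ⟨z, hz⟩ := IsAlgClosed.exists_root (φ.map (algebraMap K L))
      (by rw [Polynomial.degree_map]; exact ne_of_gt hφpos)
    intro h0
    have hmem : z ∈ (φ.map (algebraMap K L)).roots := Polynomial.mem_roots'.mpr ⟨hφmapne, hz⟩
    rw [h0] at hmem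
    exact absurd hmem (Multiset.notMem_zero z)
  obtain ⟨θs, hθsm, hθs⟩ := multiset_sup_attained _
    (fun α => ((wbar.toFun (X - C α) : WithTop Γ) : WithBot (WithTop Γ))) hφrne
  have hδφ : delta wbar φ = ((wbar.toFun (X - C θs) : WithTop Γ) : WithBot (WithTop Γ)) := hθs
  have MAIN : ∀ n : ℕ, ∀ f : Polynomial K, f ≠ 0 → f.natDegree ≤ n →
      f.degree < φ.degree → delta wbar f < delta wbar φ := by
    intro n
    induction n using Nat.strong_induction_on with
    | _ n ih =>
    intro f hf hfn hfdeg
    rcases Nat.eq_zero_or_pos f.natDegree with hf0 | hf1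
    · obtain ⟨cc, hcc⟩ := Polynomial.natDegree_eq_zero.mp hf0
      have hδf : delta wbar f = ⊥ := by
        rw [delta, ← hcc, Polynomial.map_C, Polynomial.roots_C]
        simp
      rw [hδf, hδφ]
      exact WithBot.bot_lt_coe _
    · by_contra hcon
      push_neg at hcon
      set g := f * C f.leadingCoeff⁻¹ with hgdef
      have hgm : g.Monic := Polynomial.monic_mul_leadingCoeff_inv hf
      have hgne : g ≠ 0 := hgm.ne_zero
      have hgdeg : g.degree = f.degree := Polynomial.degree_mul_leadingCoeff_inv f hf
      have hgpos : 0 < g.degree := by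
        rw [hgdeg]
        exact Polynomial.natDegree_pos_iff_degree_pos.mp hf1
      have hrootseq : (g.map (algebraMap K L)).roots = (f.map (algebraMap K L)).roots := by
        rw [hgdef, Polynomial.map_mul, Polynomial.map_C, mul_comm]
        exact Polynomial.roots_C_mul _
          ((map_ne_zero_iff _ (algebraMap K L).injective).mpr
            (inv_ne_zero (Polynomial.leadingCoeff_ne_zero.mpr hf)))
      have hδg : delta wbar g = delta wbar f := by
        rw [delta, delta, hrootseq]
      have hgrne : (g.map (algebraMap K L)).roots ≠ 0 := by
        rw [hrootseq]
        have hfmapne : f.map (algebraMap K L) ≠ 0 := Polynomial.map_ne_zero hf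
        obtain ⟨z, hz⟩ := IsAlgClosed.exists_root (f.map (algebraMap K L))
          (by
            rw [Polynomial.degree_map]
            exact ne_of_gt (Polynomial.natDegree_pos_iff_degree_pos.mp hf1))
        intro h0
        have hmem : z ∈ (f.map (algebraMap K L)).roots := Polynomial.mem_roots'.mpr ⟨hfmapne, hz⟩
        rw [h0] at hmem
        exact absurd hmem (Multiset.notMem_zero z)
      obtain ⟨βs, hβsm, hβs⟩ := multiset_sup_attained _
        (fun α => ((wbar.toFun (X - C α) : WithTop Γ) : WithBot (WithTop Γ))) hgrne
      have hδgval : delta wbar g = ((wbar.toFun (X - C βs) : WithTop Γ) : WithBot (WithTop Γ)) :=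
        hβs
      have hττ : wbar.toFun (X - C θs) ≤ wbar.toFun (X - C βs) := by
        have h2 := hcon
        rw [hδφ, ← hδg, hδgval] at h2
        exact_mod_cast h2
      have hφroots : ∀ θ ∈ (φ.map (algebraMap K L)).roots,
          wbar.toFun (X - C θ) ≤ wbar.toFun (X - C θs) := by
        intro θ hθ
        have h1 : ((wbar.toFun (X - C θ) : WithTop Γ) : WithBot (WithTop Γ)) ≤ delta wbar φ :=
          Multiset.le_sup (Multiset.mem_map_of_mem _ hθ)
        rw [hδφ] at h1
        exact_mod_cast h1
      have hβroot : (g.map (algebraMap K L)).IsRoot βs := (Polynomial.mem_roots'.mp hβsm).2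
      have hsmall : ∀ h : Polynomial K, h ≠ 0 → h.degree < g.degree →
          ∀ θ ∈ (h.map (algebraMap K L)).roots,
            wbar.toFun (X - C θ) < wbar.toFun (X - C θs) := by
        intro h hne hdeg θ hθ
        have hdf : h.degree < f.degree := by rwa [hgdeg] at hdeg
        have hnat : h.natDegree < f.natDegree := Polynomial.natDegree_lt_natDegree hne hdf
        have hδh := ih h.natDegree (by omega) h hne le_rfl (lt_trans hdf hfdeg)
        have h1 : ((wbar.toFun (X - C θ) : WithTop Γ) : WithBot (WithTop Γ)) ≤ delta wbar h :=
          Multiset.le_sup (Multiset.mem_map_of_mem _ hθ)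
        have h2 := lt_of_le_of_lt h1 hδh
        rw [hδφ] at h2
        exact_mod_cast h2
      have hkey := key_ineq vbar wbar hcomm.2 φ g hφne hgm hgpos βs (wbar.toFun (X - C θs))
        (wbar.ne_top' _ (Polynomial.X_sub_C_ne_zero θs)) hβroot hττ hφroots hsmall
      have hkey' : ∀ s : ℕ, (γ : WithTop Γ) ≤ w.toFun ((φ /ₘ g ^ s) %ₘ g) + s • w.toFun g := by
        intro s
        have h2 := hkey s
        rw [hcomm.1, hcomm.1, hcomm.1, hwφ] at h2
        exact h2
      set N := φ.natDegree with hNdef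
      have hcsdeg : ∀ k : ℕ, ((φ /ₘ g ^ k) %ₘ g).degree < φ.degree := fun k =>
        lt_trans (Polynomial.degree_modByMonic_lt _ hgm) (by rw [hgdeg]; exact hfdeg)
      have hchoice : ∀ k : ℕ, ∃ i0 : ι, ∀ i, i0 ≤ i →
          (F.rho i).toFun ((φ /ₘ g ^ k) %ₘ g) = w.toFun ((φ /ₘ g ^ k) %ₘ g) :=
        fun k => hstab _ (hcsdeg k)
      choose I hI using hchoice
      obtain ⟨ig, hig⟩ := hstab g (by rw [hgdeg]; exact hfdeg)
      set T : Finset ι := insert ig ((Finset.range (N + 1)).image I) with hT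
      have hTne : T.Nonempty := ⟨ig, Finset.mem_insert_self _ _⟩
      set i0 := T.max' hTne with hi0
      have hρg : (F.rho i0).toFun g = w.toFun g :=
        hig i0 (Finset.le_max' T ig (Finset.mem_insert_self _ _))
      have hρc : ∀ k ∈ Finset.range (N + 1),
          (F.rho i0).toFun ((φ /ₘ g ^ k) %ₘ g) = w.toFun ((φ /ₘ g ^ k) %ₘ g) := fun k hk =>
        hI k i0 (Finset.le_max' T (I k) (Finset.mem_insert_of_mem (Finset.mem_image_of_mem I hk)))
      have hexp : ∑ k ∈ Finset.range (N + 1), (φ /ₘ g ^ k) %ₘ g * g ^ k = φ :=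
        expansion_sum g hgm hgpos N φ le_rfl
      have hbound : (γ : WithTop Γ) ≤ (F.rho i0).toFun φ := by
        conv_rhs => rw [← hexp]
        refine (F.rho i0).val_sum_ge _ _ fun k hk => ?_
        rw [(F.rho i0).map_mul', ValOn.val_pow, hρg, hρc k hk]
        exact hkey' k
      exact absurd (hγ i0) (not_lt.mpr hbound)
  refine ⟨⟨hφm, fun f hfne hfdeg => MAIN f.natDegree f hfne le_rfl hfdeg⟩, fun i => ?_⟩
  exact MAIN (F.chi i).natDegree (F.chi i) (hχm i).ne_zero le_rfl (hχφdeg i)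


end MLV
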